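/- Let N ≥ 2 be an integer and let c = (c_i)_{0≤i≤N} be a nonnegative differentiable solution of the N-truncated isolated DGED system on an interval I ⊆ ℝ containing 0. Then both the total number of clusters ∑_{i=0}^N c_i(t) and the total mass ∑_{i=0}^N i c_i(t) are constant in t; that is, ∑_{i=0}^N c_i(t) = ∑_{i=0}^N c_i(0) and ∑_{i=0}^N i c_i(t) = ∑_{i=0}^N i c_i(0) for all t ∈ I. -/

import Mathlib

open Finset

/-- Truncated operator `Q^N_{1,i}`. -/
noncomputable def QN1 (a : ℕ → ℕ → ℕ → ℝ) (N : ℕ) (c : ℕ → ℝ) (i : ℕ) : ℝ :=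
  ∑ k ∈ Finset.Icc 1 (N - i), ∑ j ∈ Finset.Icc 0 (N - k), a (i + k) j k * c (i + k) * c j

/-- Truncated operator `Q^N_{2,i}`. -/
noncomputable def QN2 (a : ℕ → ℕ → ℕ → ℝ) (N : ℕ) (c : ℕ → ℝ) (i : ℕ) : ℝ :=
  -∑ k ∈ Finset.Icc 1 (N - i), ∑ j ∈ Finset.Icc k N, a j i k * c j * c i

/-- Truncated operator `Q^N_{3,i}`. -/
noncomputable def QN3 (a : ℕ → ℕ → ℕ → ℝ) (N : ℕ) (c : ℕ → ℝ) (i : ℕ) : ℝ :=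
  ∑ k ∈ Finset.Icc 1 i, ∑ j ∈ Finset.Icc k N, a j (i - k) k * c j * c (i - k)

/-- Truncated operator `Q^N_{4,i}`. -/
noncomputable def QN4 (a : ℕ → ℕ → ℕ → ℝ) (N : ℕ) (c : ℕ → ℝ) (i : ℕ) : ℝ :=
  -∑ k ∈ Finset.Icc 1 i, ∑ j ∈ Finset.Icc 0 (N - k), a i j k * c j * c i

/-- `c` is a solution of the `N`-truncated isolated DGED system on the set `I`. -/
def IsTruncSolIso (a : ℕ → ℕ → ℕ → ℝ) (N : ℕ) (I : Set ℝ) (c : ℕ → ℝ → ℝ) : Prop :=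
  ∀ t ∈ I,
    HasDerivAt (c 0) (QN1 a N (fun n => c n t) 0 + QN2 a N (fun n => c n t) 0) t ∧
    (∀ i, 1 ≤ i → i ≤ N - 1 →
      HasDerivAt (c i)
        (QN1 a N (fun n => c n t) i + QN2 a N (fun n => c n t) i +
          QN3 a N (fun n => c n t) i + QN4 a N (fun n => c n t) i) t) ∧
    HasDerivAt (c N) (QN3 a N (fun n => c n t) N + QN4 a N (fun n => c n t) N) t


lemma pair_reindex (N : ℕ) (f : ℕ → ℕ → ℝ) :
    ∑ i ∈ range (N+1), ∑ k ∈ Icc 1 (N - i), f i k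
      = ∑ m ∈ range (N+1), ∑ k ∈ Icc 1 m, f (m - k) k := by
  rw [Finset.sum_sigma', Finset.sum_sigma']
  refine Finset.sum_nbij' (fun p => ⟨p.1 + p.2, p.2⟩) (fun p => ⟨p.1 - p.2, p.2⟩) ?_ ?_ ?_ ?_ ?_ <;>
    simp only [Finset.mem_sigma, Finset.mem_range, Finset.mem_Icc] <;>
    rintro ⟨x, y⟩ h <;> dsimp only at h ⊢
  · omega
  · omega
  · have h1 : x + y - y = x := by omega
    simp [h1]
  · have h1 : x - y + y = x := by omega
    simp [h1]
  · congr 1; omega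

lemma tri_swap (N : ℕ) (F : ℕ → ℕ → ℕ → ℝ) :
    ∑ m ∈ range (N+1), ∑ k ∈ Icc 1 (N - m), ∑ j ∈ Icc k N, F m k j
      = ∑ m ∈ range (N+1), ∑ k ∈ Icc 1 m, ∑ j ∈ Icc 0 (N - k), F j k m := by
  rw [Finset.sum_sigma', Finset.sum_sigma', Finset.sum_sigma', Finset.sum_sigma']
  refine Finset.sum_nbij' (fun p => ⟨⟨p.2, p.1.2⟩, p.1.1⟩) (fun p => ⟨⟨p.2, p.1.2⟩, p.1.1⟩) ?_ ?_ ?_ ?_ ?_ <;>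
    simp only [Finset.mem_sigma, Finset.mem_range, Finset.mem_Icc] <;>
    rintro ⟨⟨x, y⟩, z⟩ h <;> dsimp only at h ⊢
  · omega
  · omega

section
variable (a : ℕ → ℕ → ℕ → ℝ) (N : ℕ) (c : ℕ → ℝ)

lemma sumQ1w (w : ℕ → ℝ) :
    ∑ i ∈ range (N+1), w i * QN1 a N c i
      = ∑ m ∈ range (N+1), ∑ k ∈ Icc 1 m,
          w (m - k) * ∑ j ∈ Icc 0 (N - k), a m j k * c m * c j := by
  have : ∀ i ∈ range (N+1), w i * QN1 a N c i
      = ∑ k ∈ Icc 1 (N - i), w i * ∑ j ∈ Icc 0 (N - k), a (i + k) j k * c (i + k) * c j := by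
    intro i _; rw [QN1, Finset.mul_sum]
  rw [Finset.sum_congr rfl this,
    pair_reindex N (fun i k => w i * ∑ j ∈ Icc 0 (N - k), a (i + k) j k * c (i + k) * c j)]
  refine Finset.sum_congr rfl fun m _ => Finset.sum_congr rfl fun k hk => ?_
  simp only [Finset.mem_Icc] at hk
  have h1 : m - k + k = m := by omega
  rw [h1]

lemma sumQ4w (w : ℕ → ℝ) :
    ∑ i ∈ range (N+1), w i * QN4 a N c i
      = -∑ m ∈ range (N+1), ∑ k ∈ Icc 1 m,
          w m * ∑ j ∈ Icc 0 (N - k), a m j k * c m * c j := by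
  rw [← Finset.sum_neg_distrib]
  refine Finset.sum_congr rfl fun m _ => ?_
  simp only [QN4, mul_neg, neg_inj, Finset.mul_sum]
  exact Finset.sum_congr rfl fun k _ => Finset.sum_congr rfl fun j _ => by ring

lemma sumQ3w (w : ℕ → ℝ) :
    ∑ i ∈ range (N+1), w i * QN3 a N c i
      = ∑ m ∈ range (N+1), ∑ k ∈ Icc 1 (N - m),
          w (m + k) * ∑ j ∈ Icc k N, a j m k * c j * c m := by
  rw [pair_reindex N (fun m k => w (m + k) * ∑ j ∈ Icc k N, a j m k * c j * c m)]
  refine Finset.sum_congr rfl fun i _ => ?_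
  rw [QN3, Finset.mul_sum]
  refine Finset.sum_congr rfl fun k hk => ?_
  simp only [Finset.mem_Icc] at hk
  have h1 : i - k + k = i := by omega
  rw [h1]

lemma sumQ2w (w : ℕ → ℝ) :
    ∑ i ∈ range (N+1), w i * QN2 a N c i
      = -∑ m ∈ range (N+1), ∑ k ∈ Icc 1 (N - m),
          w m * ∑ j ∈ Icc k N, a j m k * c j * c m := by
  rw [← Finset.sum_neg_distrib]
  refine Finset.sum_congr rfl fun m _ => ?_
  simp only [QN2, mul_neg, neg_inj, Finset.mul_sum]

lemma number_zero :
    ∑ i ∈ range (N+1), (QN1 a N c i + QN2 a N c i + QN3 a N c i + QN4 a N c i) = 0 := by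
  have h1 := sumQ1w a N c (fun _ => (1:ℝ))
  have h2 := sumQ2w a N c (fun _ => (1:ℝ))
  have h3 := sumQ3w a N c (fun _ => (1:ℝ))
  have h4 := sumQ4w a N c (fun _ => (1:ℝ))
  simp only [one_mul] at h1 h2 h3 h4
  rw [Finset.sum_add_distrib, Finset.sum_add_distrib, Finset.sum_add_distrib,
    h1, h2, h3, h4]
  ring

lemma mass_zero :
    ∑ i ∈ range (N+1), (i:ℝ) * (QN1 a N c i + QN2 a N c i + QN3 a N c i + QN4 a N c i) = 0 := by
  have h1 := sumQ1w a N c (fun n => (n:ℝ))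
  have h2 := sumQ2w a N c (fun n => (n:ℝ))
  have h3 := sumQ3w a N c (fun n => (n:ℝ))
  have h4 := sumQ4w a N c (fun n => (n:ℝ))
  have expand : ∑ i ∈ range (N+1), (i:ℝ) * (QN1 a N c i + QN2 a N c i + QN3 a N c i + QN4 a N c i)
      = (∑ i ∈ range (N+1), (i:ℝ) * QN1 a N c i) + (∑ i ∈ range (N+1), (i:ℝ) * QN2 a N c i)
        + (∑ i ∈ range (N+1), (i:ℝ) * QN3 a N c i) + (∑ i ∈ range (N+1), (i:ℝ) * QN4 a N c i) := by
    simp only [mul_add]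
    rw [Finset.sum_add_distrib, Finset.sum_add_distrib, Finset.sum_add_distrib]
  rw [expand, h1, h2, h3, h4]
  have e1 : (∑ m ∈ range (N+1), ∑ k ∈ Icc 1 m, ((m - k : ℕ):ℝ) * ∑ j ∈ Icc 0 (N - k), a m j k * c m * c j)
      - (∑ m ∈ range (N+1), ∑ k ∈ Icc 1 m, (m:ℝ) * ∑ j ∈ Icc 0 (N - k), a m j k * c m * c j)
      = -∑ m ∈ range (N+1), ∑ k ∈ Icc 1 m, ∑ j ∈ Icc 0 (N - k), (k:ℝ) * (a m j k * c m * c j) := by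
    rw [← Finset.sum_sub_distrib, ← Finset.sum_neg_distrib]
    refine Finset.sum_congr rfl fun m _ => ?_
    rw [← Finset.sum_sub_distrib, ← Finset.sum_neg_distrib]
    refine Finset.sum_congr rfl fun k hk => ?_
    simp only [Finset.mem_Icc] at hk
    rw [Nat.cast_sub hk.2, Finset.mul_sum, Finset.mul_sum, ← Finset.sum_neg_distrib,
      ← Finset.sum_sub_distrib]
    exact Finset.sum_congr rfl fun j _ => by ring
  have e2 : (∑ m ∈ range (N+1), ∑ k ∈ Icc 1 (N - m), ((m + k : ℕ):ℝ) * ∑ j ∈ Icc k N, a j m k * c j * c m)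
      - (∑ m ∈ range (N+1), ∑ k ∈ Icc 1 (N - m), (m:ℝ) * ∑ j ∈ Icc k N, a j m k * c j * c m)
      = ∑ m ∈ range (N+1), ∑ k ∈ Icc 1 (N - m), ∑ j ∈ Icc k N, (k:ℝ) * (a j m k * c j * c m) := by
    rw [← Finset.sum_sub_distrib]
    refine Finset.sum_congr rfl fun m _ => ?_
    rw [← Finset.sum_sub_distrib]
    refine Finset.sum_congr rfl fun k hk => ?_
    push_cast
    rw [Finset.mul_sum, Finset.mul_sum, ← Finset.sum_sub_distrib]
    exact Finset.sum_congr rfl fun j _ => by ring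
  have e3 := tri_swap N (fun m k j => (k:ℝ) * (a j m k * c j * c m))
  linarith [e1, e2, e3]
end

/-- Corollary 4.2: conservation of the total number of clusters and of the total mass
for nonnegative solutions of the truncated isolated system. -/
theorem truncated_isolated_conservation
    (a : ℕ → ℕ → ℕ → ℝ) (ha : ∀ i j k, 0 ≤ a i j k)
    (hzero : ∀ p : ℕ, 1 ≤ p → a p 0 p = 0)
    (N : ℕ) (hN : 2 ≤ N) (I : Set ℝ) (hI : Convex ℝ I) (hI0 : (0 : ℝ) ∈ I)
    (c : ℕ → ℝ → ℝ) (hc : IsTruncSolIso a N I c)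
    (hnn : ∀ i, i ≤ N → ∀ t ∈ I, 0 ≤ c i t)
    (t : ℝ) (ht : t ∈ I) :
    (∑ i ∈ Finset.range (N + 1), c i t = ∑ i ∈ Finset.range (N + 1), c i 0) ∧
    (∑ i ∈ Finset.range (N + 1), (i : ℝ) * c i t
      = ∑ i ∈ Finset.range (N + 1), (i : ℝ) * c i 0) := by
  have hd : ∀ s ∈ I, ∀ i ∈ Finset.range (N+1),
      HasDerivAt (c i) (QN1 a N (fun n => c n s) i + QN2 a N (fun n => c n s) i
        + QN3 a N (fun n => c n s) i + QN4 a N (fun n => c n s) i) s := by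
    intro s hs i hi
    obtain ⟨h0, hmid, hNl⟩ := hc s hs
    simp only [Finset.mem_range] at hi
    rcases eq_or_ne i 0 with rfl | hi0
    · have e3 : QN3 a N (fun n => c n s) 0 = 0 := by
        rw [QN3, show Finset.Icc 1 0 = (∅ : Finset ℕ) from Finset.Icc_eq_empty (by omega)]
        simp
      have e4 : QN4 a N (fun n => c n s) 0 = 0 := by
        rw [QN4, show Finset.Icc 1 0 = (∅ : Finset ℕ) from Finset.Icc_eq_empty (by omega)]
        simp
      rw [e3, e4, add_zero, add_zero]
      exact h0
    rcases eq_or_ne i N with hiN | hiN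
    · rw [hiN]
      have e1 : QN1 a N (fun n => c n s) N = 0 := by
        rw [QN1, Nat.sub_self,
          show Finset.Icc 1 0 = (∅ : Finset ℕ) from Finset.Icc_eq_empty (by omega)]
        simp
      have e2 : QN2 a N (fun n => c n s) N = 0 := by
        rw [QN2, Nat.sub_self,
          show Finset.Icc 1 0 = (∅ : Finset ℕ) from Finset.Icc_eq_empty (by omega)]
        simp
      rw [e1, e2, zero_add, zero_add]
      exact hNl
    · exact hmid i (by omega) (by omega)
  have const : ∀ (f : ℝ → ℝ), (∀ s ∈ I, HasDerivAt f 0 s) → f t = f 0 := by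
    intro f hf
    have h := hI.norm_image_sub_le_of_norm_hasDerivWithin_le (C := 0) (f' := fun _ => (0:ℝ))
      (fun x hx => (hf x hx).hasDerivWithinAt) (fun x _ => by simp) hI0 ht
    rw [zero_mul] at h
    exact sub_eq_zero.mp (norm_le_zero_iff.mp h)
  constructor
  · refine const (fun s => ∑ i ∈ Finset.range (N+1), c i s) ?_
    intro s hs
    have h := HasDerivAt.fun_sum (hd s hs)
    rwa [number_zero a N (fun n => c n s)] at h
  · refine const (fun s => ∑ i ∈ Finset.range (N+1), (i:ℝ) * c i s) ?_
    intro s hs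
    have h := HasDerivAt.fun_sum (u := Finset.range (N+1))
      (fun i hi => ((hd s hs i hi).const_mul (i:ℝ)))
    rwa [mass_zero a N (fun n => c n s)] at h
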